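/- For all n ≥ 1 and i, j ≥ 0, the coefficients r_{n,i,j} satisfy r_{2n+1,i,j} = 2r_{2n,i,j} + (2i+2)r_{2n,i+1,j-1} + (j+1)r_{2n,i,j+1} + (2n-2i-j+1)r_{2n,i,j-1} and r_{2n,i,j} = 2r_{2n-1,i-1,j} + (2i+1)r_{2n-1,i,j-1} + (j+1)r_{2n-1,i-1,j+1} + (2n-2i-j+1)r_{2n-1,i-1,j-1}. -/

import Mathlib

open MvPolynomial Finset

/-- The derivation for the grammar `G = {w → wx, x → yz, y → xz, z → xy}` on `ℚ[w,x,y,z]`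
(`w = X 0`, `x = X 1`, `y = X 2`, `z = X 3`). -/
noncomputable def Dg : Derivation ℚ (MvPolynomial (Fin 4) ℚ) (MvPolynomial (Fin 4) ℚ) :=
  MvPolynomial.mkDerivation ℚ ![X 0 * X 1, X 2 * X 3, X 1 * X 3, X 1 * X 2]

/-- `rC n i j` is the coefficient `r_{n,i,j}` of `D^n(w^2)`:
for even `n`, the coefficient of `w^2 x^(2i) y^j z^(n-2i-j)`;
for odd `n`, the coefficient of `w^2 x^(2i+1) y^j z^(n-1-2i-j)`.
Coefficients with negative indices are `0`. -/
noncomputable def rC (n : ℕ) (i j : ℤ) : ℚ :=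
  if 0 ≤ i ∧ 0 ≤ j then
    MvPolynomial.coeff
      (Finsupp.single 0 2
        + Finsupp.single 1 ((if Even n then 2*i else 2*i+1).toNat)
        + Finsupp.single 2 j.toNat
        + Finsupp.single 3 (((n:ℤ) - 2*i - j - if Even n then 0 else 1).toNat))
      ((fun p => Dg p)^[n] (X 0 ^ 2))
  else 0




lemma Dg_apply (p : MvPolynomial (Fin 4) ℚ) :
    Dg p = X 0 * X 1 * pderiv 0 p + X 2 * X 3 * pderiv 1 p
      + X 1 * X 3 * pderiv 2 p + X 1 * X 2 * pderiv 3 p := by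
  induction p using MvPolynomial.induction_on with
  | C a => simp
  | add p q hp hq => simp only [map_add, hp, hq]; ring
  | mul_X p n hp =>
      have hD : Dg (X n) = ![X 0 * X 1, X 2 * X 3, X 1 * X 3, X 1 * X 2] n :=
        MvPolynomial.mkDerivation_X _ _ _
      rw [Derivation.leibniz, smul_eq_mul, smul_eq_mul, hp, hD]
      simp only [pderiv_mul]
      fin_cases n <;>
        simp [pderiv_X, Pi.single_apply, Matrix.cons_val_zero, Matrix.cons_val_one] <;> ring

lemma coeff_pderiv (i : Fin 4) (p : MvPolynomial (Fin 4) ℚ) (m : Fin 4 →₀ ℕ) :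
    coeff m (pderiv i p) = (m i + 1 : ℚ) * coeff (m + Finsupp.single i 1) p := by
  induction p using MvPolynomial.induction_on' with
  | add p q hp hq => simp only [map_add, coeff_add, hp, hq]; ring
  | monomial s a =>
      rw [pderiv_monomial]
      simp only [coeff_monomial]
      by_cases h : s = m + Finsupp.single i 1
      · have hsi : s i = m i + 1 := by simp [h]
        have hsub : s - Finsupp.single i 1 = m := by
          ext j
          by_cases hj : j = i <;>
            simp [h, Finsupp.single_apply, hj, Finsupp.tsub_apply]
        rw [hsub, if_pos rfl, if_pos h, hsi]
        push_cast; ring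
      · rw [if_neg h]
        by_cases h2 : s - Finsupp.single i 1 = m
        · by_cases hsi : s i = 0
          · rw [if_pos h2, hsi]; simp
          · exfalso
            apply h
            ext j
            have hthis := DFunLike.congr_fun h2 j
            by_cases hj : j = i
            · subst hj
              simp [Finsupp.single_apply, Finsupp.tsub_apply] at hthis ⊢
              omega
            · have hj' : ¬ i = j := fun hh => hj hh.symm
              simp [Finsupp.single_apply, hj, hj', Finsupp.tsub_apply] at hthis ⊢
              omega
        · rw [if_neg h2]; simp

noncomputable def F (a b c d : ℕ) : Fin 4 →₀ ℕ :=
  Finsupp.single 0 a + Finsupp.single 1 b + Finsupp.single 2 c + Finsupp.single 3 d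

@[simp] lemma F_apply_0 (a b c d : ℕ) : F a b c d 0 = a := by
  simp [F, Finsupp.single_apply]
@[simp] lemma F_apply_1 (a b c d : ℕ) : F a b c d 1 = b := by
  simp [F, Finsupp.single_apply]
@[simp] lemma F_apply_2 (a b c d : ℕ) : F a b c d 2 = c := by
  simp [F, Finsupp.single_apply]
@[simp] lemma F_apply_3 (a b c d : ℕ) : F a b c d 3 = d := by
  simp [F, Finsupp.single_apply]

lemma F0succ (a b c d : ℕ) : F (a+1) b c d = Finsupp.single 0 1 + F a b c d := by
  simp [F, Finsupp.single_add]; abel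
lemma F1succ (a b c d : ℕ) : F a (b+1) c d = Finsupp.single 1 1 + F a b c d := by
  simp [F, Finsupp.single_add]; abel
lemma F2succ (a b c d : ℕ) : F a b (c+1) d = Finsupp.single 2 1 + F a b c d := by
  simp [F, Finsupp.single_add]; abel
lemma F3succ (a b c d : ℕ) : F a b c (d+1) = Finsupp.single 3 1 + F a b c d := by
  simp [F, Finsupp.single_add]; abel

lemma degF (a b c d : ℕ) : Finsupp.degree (F a b c d) = a + b + c + d := by
  simp [F, Finsupp.degree_eq_weight_one, map_add, Finsupp.weight_apply, Finsupp.sum_single_index]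

lemma coeff_zero_of_not_mem (q : MvPolynomial (Fin 4) ℚ) (s : Fin 4) (m : Fin 4 →₀ ℕ)
    (h : m s = 0) : coeff m (X s * q) = 0 := by
  rw [coeff_X_mul', if_neg (by simp [Finsupp.mem_support_iff, h])]

lemma s1 (p : MvPolynomial (Fin 4) ℚ) (a b c d : ℕ) :
    coeff (F a b c d) (X 0 * X 1 * pderiv 0 p) =
      if 1 ≤ a ∧ 1 ≤ b then (a:ℚ) * coeff (F a (b-1) c d) p else 0 := by
  rcases a with _|a
  · rw [if_neg (by omega), mul_assoc, coeff_zero_of_not_mem _ _ _ (by simp)]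
  rcases b with _|b
  · rw [if_neg (by omega), show X 0 * X 1 * pderiv 0 p = X 1 * (X 0 * pderiv 0 p) by ring,
      coeff_zero_of_not_mem _ _ _ (by simp)]
  rw [if_pos ⟨by omega, by omega⟩, mul_assoc, F0succ, coeff_X_mul, F1succ, coeff_X_mul,
    coeff_pderiv, F_apply_0, show F a b c d + Finsupp.single 0 1 = F (a+1) b c d from by
      rw [F0succ]; abel]
  push_cast; norm_num

lemma s2 (p : MvPolynomial (Fin 4) ℚ) (a b c d : ℕ) :
    coeff (F a b c d) (X 2 * X 3 * pderiv 1 p) =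
      if 1 ≤ c ∧ 1 ≤ d then ((b:ℚ)+1) * coeff (F a (b+1) (c-1) (d-1)) p else 0 := by
  rcases c with _|c
  · rw [if_neg (by omega), mul_assoc, coeff_zero_of_not_mem _ _ _ (by simp)]
  rcases d with _|d
  · rw [if_neg (by omega), show X 2 * X 3 * pderiv 1 p = X 3 * (X 2 * pderiv 1 p) by ring,
      coeff_zero_of_not_mem _ _ _ (by simp)]
  rw [if_pos ⟨by omega, by omega⟩, mul_assoc, F2succ, coeff_X_mul, F3succ, coeff_X_mul,
    coeff_pderiv, F_apply_1, show F a b c d + Finsupp.single 1 1 = F a (b+1) c d from by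
      rw [F1succ]; abel]
  push_cast; norm_num

lemma s3 (p : MvPolynomial (Fin 4) ℚ) (a b c d : ℕ) :
    coeff (F a b c d) (X 1 * X 3 * pderiv 2 p) =
      if 1 ≤ b ∧ 1 ≤ d then ((c:ℚ)+1) * coeff (F a (b-1) (c+1) (d-1)) p else 0 := by
  rcases b with _|b
  · rw [if_neg (by omega), mul_assoc, coeff_zero_of_not_mem _ _ _ (by simp)]
  rcases d with _|d
  · rw [if_neg (by omega), show X 1 * X 3 * pderiv 2 p = X 3 * (X 1 * pderiv 2 p) by ring,
      coeff_zero_of_not_mem _ _ _ (by simp)]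
  rw [if_pos ⟨by omega, by omega⟩, mul_assoc, F1succ, coeff_X_mul, F3succ, coeff_X_mul,
    coeff_pderiv, F_apply_2, show F a b c d + Finsupp.single 2 1 = F a b (c+1) d from by
      rw [F2succ]; abel]
  push_cast; norm_num

lemma s4 (p : MvPolynomial (Fin 4) ℚ) (a b c d : ℕ) :
    coeff (F a b c d) (X 1 * X 2 * pderiv 3 p) =
      if 1 ≤ b ∧ 1 ≤ c then ((d:ℚ)+1) * coeff (F a (b-1) (c-1) (d+1)) p else 0 := by
  rcases b with _|b
  · rw [if_neg (by omega), mul_assoc, coeff_zero_of_not_mem _ _ _ (by simp)]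
  rcases c with _|c
  · rw [if_neg (by omega), show X 1 * X 2 * pderiv 3 p = X 2 * (X 1 * pderiv 3 p) by ring,
      coeff_zero_of_not_mem _ _ _ (by simp)]
  rw [if_pos ⟨by omega, by omega⟩, mul_assoc, F1succ, coeff_X_mul, F2succ, coeff_X_mul,
    coeff_pderiv, F_apply_3, show F a b c d + Finsupp.single 3 1 = F a b c (d+1) from by
      rw [F3succ]; abel]
  push_cast; norm_num

lemma coeff_Dg (p : MvPolynomial (Fin 4) ℚ) (a b c d : ℕ) :
    coeff (F a b c d) (Dg p) =
      (if 1 ≤ a ∧ 1 ≤ b then (a:ℚ) * coeff (F a (b-1) c d) p else 0)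
    + (if 1 ≤ c ∧ 1 ≤ d then ((b:ℚ)+1) * coeff (F a (b+1) (c-1) (d-1)) p else 0)
    + (if 1 ≤ b ∧ 1 ≤ d then ((c:ℚ)+1) * coeff (F a (b-1) (c+1) (d-1)) p else 0)
    + (if 1 ≤ b ∧ 1 ≤ c then ((d:ℚ)+1) * coeff (F a (b-1) (c-1) (d+1)) p else 0) := by
  rw [Dg_apply, coeff_add, coeff_add, coeff_add, s1, s2, s3, s4]

lemma pderiv_homog {p : MvPolynomial (Fin 4) ℚ} {n : ℕ} (i : Fin 4)
    (h : p.IsHomogeneous (n+1)) : (pderiv i p).IsHomogeneous n := by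
  intro m hm
  rw [coeff_pderiv] at hm
  have h2 : coeff (m + Finsupp.single i 1) p ≠ 0 := by
    intro h0; rw [h0, mul_zero] at hm; exact hm rfl
  have h3 := h h2
  change (Finsupp.weight (fun _ : Fin 4 => (1:ℕ))) _ = _ at h3 ⊢
  rw [← Finsupp.degree_eq_weight_one] at h3 ⊢
  rw [show Finsupp.degree (m + Finsupp.single i 1)
      = Finsupp.degree m + 1 from ?_] at h3
  · omega
  · rw [Finsupp.degree_eq_weight_one, map_add]
    congr 1
    simp [Finsupp.weight_apply, Finsupp.sum_single_index]

lemma homog (k : ℕ) :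
    (((fun p => Dg p)^[k] (X (0:Fin 4) ^ 2 : MvPolynomial (Fin 4) ℚ))).IsHomogeneous (k+2) := by
  induction k with
  | zero =>
      simpa using (isHomogeneous_X ℚ (0 : Fin 4)).pow 2
  | succ k ih =>
      rw [Function.iterate_succ_apply', Dg_apply]
      rw [show k + 1 + 2 = 1 + 1 + (k+1) by omega]
      have H : ∀ (i j l : Fin 4), (X i * X j
          * pderiv l ((fun p => Dg p)^[k] (X (0:Fin 4) ^ 2 : MvPolynomial (Fin 4) ℚ))).IsHomogeneous
          (1 + 1 + (k+1)) := fun i j l =>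
        ((isHomogeneous_X ℚ _).mul (isHomogeneous_X ℚ _)).mul (pderiv_homog _ ih)
      exact (((H 0 1 0).add (H 2 3 1)).add (H 1 3 2)).add (H 1 2 3)

lemma coeff_F_zero {k a b c d : ℕ} (h : a + b + c + d ≠ k + 2) :
    coeff (F a b c d) ((fun p => Dg p)^[k] (X (0:Fin 4) ^ 2 : MvPolynomial (Fin 4) ℚ)) = 0 :=
  (homog k).coeff_eq_zero (by rw [degF]; exact h)



lemma rC_neg (n : ℕ) (i j : ℤ) (h : ¬ (0 ≤ i ∧ 0 ≤ j)) : rC n i j = 0 := by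
  unfold rC; rw [if_neg h]

lemma rC_even_eval (n : ℕ) (i j : ℤ) (hi : 0 ≤ i) (hj : 0 ≤ j) (b c d : ℕ)
    (hb : (2*i).toNat = b) (hc : j.toNat = c) (hd : (2*(n:ℤ) - 2*i - j).toNat = d) :
    rC (2*n) i j = coeff (F 2 b c d) ((fun p => Dg p)^[2*n] (X (0:Fin 4) ^ 2)) := by
  unfold rC
  rw [if_pos ⟨hi, hj⟩]
  have hev : Even (2*n) := ⟨n, by ring⟩
  refine congrArg (fun m => coeff m _) ?_
  ext a
  fin_cases a <;> simp [F, Finsupp.single_apply, hev] <;> omega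

lemma rC_odd_eval (n : ℕ) (i j : ℤ) (hi : 0 ≤ i) (hj : 0 ≤ j) (b c d : ℕ)
    (hb : (2*i+1).toNat = b) (hc : j.toNat = c) (hd : (2*(n:ℤ) - 2*i - j).toNat = d) :
    rC (2*n+1) i j = coeff (F 2 b c d) ((fun p => Dg p)^[2*n+1] (X (0:Fin 4) ^ 2)) := by
  unfold rC
  rw [if_pos ⟨hi, hj⟩]
  have hod : ¬ Even (2*n+1) := by rintro ⟨k, hk⟩; omega
  refine congrArg (fun m => coeff m _) ?_
  ext a
  fin_cases a <;> simp [F, Finsupp.single_apply, hod] <;> omega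

lemma rC_even_zero (n : ℕ) (i j : ℤ) (hi : 0 ≤ i) (hj : 0 ≤ j)
    (h : 2*(n:ℤ) < 2*i + j) : rC (2*n) i j = 0 := by
  rw [rC_even_eval n i j hi hj _ _ _ rfl rfl rfl]
  exact coeff_F_zero (by omega)

lemma rC_odd_zero (n : ℕ) (i j : ℤ) (hi : 0 ≤ i) (hj : 0 ≤ j)
    (h : 2*(n:ℤ) < 2*i + j) : rC (2*n+1) i j = 0 := by
  rw [rC_odd_eval n i j hi hj _ _ _ rfl rfl rfl]
  exact coeff_F_zero (by omega)

lemma toNat_castQ {e : ℤ} (h : 0 ≤ e) : ((e.toNat : ℕ) : ℚ) = (e : ℚ) := by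
  exact_mod_cast Int.toNat_of_nonneg h

lemma part1 (n I J : ℕ) :
    rC (2*n+1) (I:ℤ) (J:ℤ) =
      2 * rC (2*n) (I:ℤ) (J:ℤ) + (2*(I:ℚ)+2) * rC (2*n) ((I:ℤ)+1) ((J:ℤ)-1)
        + ((J:ℚ)+1) * rC (2*n) (I:ℤ) ((J:ℤ)+1)
        + (2*(n:ℚ)-2*(I:ℚ)-(J:ℚ)+1) * rC (2*n) (I:ℤ) ((J:ℤ)-1) := by
  rw [rC_odd_eval n I J (by omega) (by omega) (2*I+1) J
    ((2*(n:ℤ)-2*(I:ℤ)-(J:ℤ)).toNat) (by omega) (by omega) rfl]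
  simp only [Function.iterate_succ_apply']
  rw [coeff_Dg, if_pos (show (1:ℕ) ≤ 2 ∧ 1 ≤ 2*I+1 by omega),
    rC_even_eval n I J (by omega) (by omega) (2*I+1-1) J
      ((2*(n:ℤ)-2*(I:ℤ)-(J:ℤ)).toNat) (by omega) (by omega) rfl]
  by_cases hJ : 1 ≤ J <;> by_cases hE : (1:ℤ) ≤ 2*(n:ℤ)-2*(I:ℤ)-(J:ℤ)
  -- TTT : J ≥ 1, e ≥ 1
  · rw [if_pos (show 1 ≤ J ∧ 1 ≤ (2*(n:ℤ)-2*(I:ℤ)-(J:ℤ)).toNat by omega),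
      if_pos (show 1 ≤ 2*I+1 ∧ 1 ≤ (2*(n:ℤ)-2*(I:ℤ)-(J:ℤ)).toNat by omega),
      if_pos (show 1 ≤ 2*I+1 ∧ 1 ≤ J by omega),
      rC_even_eval n ((I:ℤ)+1) ((J:ℤ)-1) (by omega) (by omega) (2*I+1+1) (J-1)
        ((2*(n:ℤ)-2*(I:ℤ)-(J:ℤ)).toNat - 1) (by omega) (by omega) (by omega),
      rC_even_eval n (I:ℤ) ((J:ℤ)+1) (by omega) (by omega) (2*I+1-1) (J+1)
        ((2*(n:ℤ)-2*(I:ℤ)-(J:ℤ)).toNat - 1) (by omega) (by omega) (by omega),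
      rC_even_eval n (I:ℤ) ((J:ℤ)-1) (by omega) (by omega) (2*I+1-1) (J-1)
        ((2*(n:ℤ)-2*(I:ℤ)-(J:ℤ)).toNat + 1) (by omega) (by omega) (by omega),
      toNat_castQ (show (0:ℤ) ≤ 2*(n:ℤ)-2*(I:ℤ)-(J:ℤ) by omega)]
    push_cast
    ring
  -- J ≥ 1, e ≤ 0
  · rw [if_neg (show ¬(1 ≤ J ∧ 1 ≤ (2*(n:ℤ)-2*(I:ℤ)-(J:ℤ)).toNat) by omega),
      if_neg (show ¬(1 ≤ 2*I+1 ∧ 1 ≤ (2*(n:ℤ)-2*(I:ℤ)-(J:ℤ)).toNat) by omega),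
      if_pos (show 1 ≤ 2*I+1 ∧ 1 ≤ J by omega),
      rC_even_zero n ((I:ℤ)+1) ((J:ℤ)-1) (by omega) (by omega) (by omega),
      rC_even_zero n (I:ℤ) ((J:ℤ)+1) (by omega) (by omega) (by omega)]
    by_cases he0 : (0:ℤ) ≤ 2*(n:ℤ)-2*(I:ℤ)-(J:ℤ)
    · rw [rC_even_eval n (I:ℤ) ((J:ℤ)-1) (by omega) (by omega) (2*I+1-1) (J-1)
          ((2*(n:ℤ)-2*(I:ℤ)-(J:ℤ)).toNat + 1) (by omega) (by omega) (by omega),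
        toNat_castQ he0]
      push_cast
      ring
    · rw [coeff_F_zero (show 2 + (2*I+1-1) + (J-1)
          + ((2*(n:ℤ)-2*(I:ℤ)-(J:ℤ)).toNat + 1) ≠ 2*n + 2 by omega)]
      by_cases he1 : 2*(n:ℤ)-2*(I:ℤ)-(J:ℤ) = -1
      · have hz : (2*(n:ℚ)-2*(I:ℚ)-(J:ℚ)+1) = 0 := by
          have h' : ((2*(n:ℤ)-2*(I:ℤ)-(J:ℤ) : ℤ) : ℚ) = -1 := by
            rw [he1]; norm_num
          push_cast at h'
          linarith
        rw [hz]
        push_cast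
        ring
      · rw [rC_even_zero n (I:ℤ) ((J:ℤ)-1) (by omega) (by omega) (by omega)]
        push_cast
        ring
  -- J = 0, e ≥ 1
  · rw [if_neg (show ¬(1 ≤ J ∧ 1 ≤ (2*(n:ℤ)-2*(I:ℤ)-(J:ℤ)).toNat) by omega),
      if_pos (show 1 ≤ 2*I+1 ∧ 1 ≤ (2*(n:ℤ)-2*(I:ℤ)-(J:ℤ)).toNat by omega),
      if_neg (show ¬(1 ≤ 2*I+1 ∧ 1 ≤ J) by omega),
      rC_neg _ ((I:ℤ)+1) ((J:ℤ)-1) (by omega),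
      rC_even_eval n (I:ℤ) ((J:ℤ)+1) (by omega) (by omega) (2*I+1-1) (J+1)
        ((2*(n:ℤ)-2*(I:ℤ)-(J:ℤ)).toNat - 1) (by omega) (by omega) (by omega),
      rC_neg _ (I:ℤ) ((J:ℤ)-1) (by omega)]
    push_cast
    ring
  -- J = 0, e ≤ 0
  · rw [if_neg (show ¬(1 ≤ J ∧ 1 ≤ (2*(n:ℤ)-2*(I:ℤ)-(J:ℤ)).toNat) by omega),
      if_neg (show ¬(1 ≤ 2*I+1 ∧ 1 ≤ (2*(n:ℤ)-2*(I:ℤ)-(J:ℤ)).toNat) by omega),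
      if_neg (show ¬(1 ≤ 2*I+1 ∧ 1 ≤ J) by omega),
      rC_neg _ ((I:ℤ)+1) ((J:ℤ)-1) (by omega),
      rC_even_zero n (I:ℤ) ((J:ℤ)+1) (by omega) (by omega) (by omega),
      rC_neg _ (I:ℤ) ((J:ℤ)-1) (by omega)]
    push_cast
    ring

lemma part2 (n I J : ℕ) (hn : 1 ≤ n) :
    rC (2*n) (I:ℤ) (J:ℤ) =
      2 * rC (2*n-1) ((I:ℤ)-1) (J:ℤ) + (2*(I:ℚ)+1) * rC (2*n-1) (I:ℤ) ((J:ℤ)-1)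
        + ((J:ℚ)+1) * rC (2*n-1) ((I:ℤ)-1) ((J:ℤ)+1)
        + (2*(n:ℚ)-2*(I:ℚ)-(J:ℚ)+1) * rC (2*n-1) ((I:ℤ)-1) ((J:ℤ)-1) := by
  rw [rC_even_eval n I J (by omega) (by omega) (2*I) J
    ((2*(n:ℤ)-2*(I:ℤ)-(J:ℤ)).toNat) (by omega) (by omega) rfl,
    show 2*n-1 = 2*(n-1)+1 from by omega,
    show 2*n = 2*(n-1)+1+1 from by omega]
  have hit : (fun p => Dg p)^[2*(n-1)+1+1] (X (0:Fin 4) ^ 2 : MvPolynomial (Fin 4) ℚ)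
      = Dg ((fun p => Dg p)^[2*(n-1)+1] (X 0 ^ 2)) := Function.iterate_succ_apply' _ _ _
  rw [hit, coeff_Dg]
  by_cases hI : 1 ≤ I <;> by_cases hJ : 1 ≤ J <;>
    by_cases hE : (1:ℤ) ≤ 2*(n:ℤ)-2*(I:ℤ)-(J:ℤ)
  -- TTT
  · rw [if_pos (show (1:ℕ) ≤ 2 ∧ 1 ≤ 2*I by omega),
      if_pos (show 1 ≤ J ∧ 1 ≤ (2*(n:ℤ)-2*(I:ℤ)-(J:ℤ)).toNat by omega),
      if_pos (show 1 ≤ 2*I ∧ 1 ≤ (2*(n:ℤ)-2*(I:ℤ)-(J:ℤ)).toNat by omega),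
      if_pos (show 1 ≤ 2*I ∧ 1 ≤ J by omega),
      rC_odd_eval (n-1) ((I:ℤ)-1) (J:ℤ) (by omega) (by omega) (2*I-1) J
        ((2*(n:ℤ)-2*(I:ℤ)-(J:ℤ)).toNat) (by omega) (by omega) (by omega),
      rC_odd_eval (n-1) (I:ℤ) ((J:ℤ)-1) (by omega) (by omega) (2*I+1) (J-1)
        ((2*(n:ℤ)-2*(I:ℤ)-(J:ℤ)).toNat - 1) (by omega) (by omega) (by omega),
      rC_odd_eval (n-1) ((I:ℤ)-1) ((J:ℤ)+1) (by omega) (by omega) (2*I-1) (J+1)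
        ((2*(n:ℤ)-2*(I:ℤ)-(J:ℤ)).toNat - 1) (by omega) (by omega) (by omega),
      rC_odd_eval (n-1) ((I:ℤ)-1) ((J:ℤ)-1) (by omega) (by omega) (2*I-1) (J-1)
        ((2*(n:ℤ)-2*(I:ℤ)-(J:ℤ)).toNat + 1) (by omega) (by omega) (by omega),
      toNat_castQ (show (0:ℤ) ≤ 2*(n:ℤ)-2*(I:ℤ)-(J:ℤ) by omega)]
    push_cast
    ring
  -- TTF
  · rw [if_pos (show (1:ℕ) ≤ 2 ∧ 1 ≤ 2*I by omega),
      if_neg (show ¬(1 ≤ J ∧ 1 ≤ (2*(n:ℤ)-2*(I:ℤ)-(J:ℤ)).toNat) by omega),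
      if_neg (show ¬(1 ≤ 2*I ∧ 1 ≤ (2*(n:ℤ)-2*(I:ℤ)-(J:ℤ)).toNat) by omega),
      if_pos (show 1 ≤ 2*I ∧ 1 ≤ J by omega),
      rC_odd_eval (n-1) ((I:ℤ)-1) (J:ℤ) (by omega) (by omega) (2*I-1) J
        ((2*(n:ℤ)-2*(I:ℤ)-(J:ℤ)).toNat) (by omega) (by omega) (by omega),
      rC_odd_zero (n-1) (I:ℤ) ((J:ℤ)-1) (by omega) (by omega) (by omega),
      rC_odd_zero (n-1) ((I:ℤ)-1) ((J:ℤ)+1) (by omega) (by omega) (by omega)]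
    by_cases he0 : (0:ℤ) ≤ 2*(n:ℤ)-2*(I:ℤ)-(J:ℤ)
    · rw [rC_odd_eval (n-1) ((I:ℤ)-1) ((J:ℤ)-1) (by omega) (by omega) (2*I-1) (J-1)
          ((2*(n:ℤ)-2*(I:ℤ)-(J:ℤ)).toNat + 1) (by omega) (by omega) (by omega),
        toNat_castQ he0]
      push_cast
      ring
    · rw [coeff_F_zero (show (2:ℕ) + (2*I-1) + (J-1)
          + ((2*(n:ℤ)-2*(I:ℤ)-(J:ℤ)).toNat + 1) ≠ 2*(n-1)+1 + 2 by omega)]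
      by_cases he1 : 2*(n:ℤ)-2*(I:ℤ)-(J:ℤ) = -1
      · have hz : (2*(n:ℚ)-2*(I:ℚ)-(J:ℚ)+1) = 0 := by
          have h' : ((2*(n:ℤ)-2*(I:ℤ)-(J:ℤ) : ℤ) : ℚ) = -1 := by
            rw [he1]; norm_num
          push_cast at h'
          linarith
        rw [hz]
        push_cast
        ring
      · rw [rC_odd_zero (n-1) ((I:ℤ)-1) ((J:ℤ)-1) (by omega) (by omega) (by omega)]
        push_cast
        ring
  -- TFT
  · rw [if_pos (show (1:ℕ) ≤ 2 ∧ 1 ≤ 2*I by omega),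
      if_neg (show ¬(1 ≤ J ∧ 1 ≤ (2*(n:ℤ)-2*(I:ℤ)-(J:ℤ)).toNat) by omega),
      if_pos (show 1 ≤ 2*I ∧ 1 ≤ (2*(n:ℤ)-2*(I:ℤ)-(J:ℤ)).toNat by omega),
      if_neg (show ¬(1 ≤ 2*I ∧ 1 ≤ J) by omega),
      rC_odd_eval (n-1) ((I:ℤ)-1) (J:ℤ) (by omega) (by omega) (2*I-1) J
        ((2*(n:ℤ)-2*(I:ℤ)-(J:ℤ)).toNat) (by omega) (by omega) (by omega),
      rC_neg _ (I:ℤ) ((J:ℤ)-1) (by omega),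
      rC_odd_eval (n-1) ((I:ℤ)-1) ((J:ℤ)+1) (by omega) (by omega) (2*I-1) (J+1)
        ((2*(n:ℤ)-2*(I:ℤ)-(J:ℤ)).toNat - 1) (by omega) (by omega) (by omega),
      rC_neg _ ((I:ℤ)-1) ((J:ℤ)-1) (by omega)]
    push_cast
    ring
  -- TFF
  · rw [if_pos (show (1:ℕ) ≤ 2 ∧ 1 ≤ 2*I by omega),
      if_neg (show ¬(1 ≤ J ∧ 1 ≤ (2*(n:ℤ)-2*(I:ℤ)-(J:ℤ)).toNat) by omega),
      if_neg (show ¬(1 ≤ 2*I ∧ 1 ≤ (2*(n:ℤ)-2*(I:ℤ)-(J:ℤ)).toNat) by omega),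
      if_neg (show ¬(1 ≤ 2*I ∧ 1 ≤ J) by omega),
      rC_odd_eval (n-1) ((I:ℤ)-1) (J:ℤ) (by omega) (by omega) (2*I-1) J
        ((2*(n:ℤ)-2*(I:ℤ)-(J:ℤ)).toNat) (by omega) (by omega) (by omega),
      rC_neg _ (I:ℤ) ((J:ℤ)-1) (by omega),
      rC_odd_zero (n-1) ((I:ℤ)-1) ((J:ℤ)+1) (by omega) (by omega) (by omega),
      rC_neg _ ((I:ℤ)-1) ((J:ℤ)-1) (by omega)]
    push_cast
    ring
  -- FTT
  · rw [if_neg (show ¬((1:ℕ) ≤ 2 ∧ 1 ≤ 2*I) by omega),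
      if_pos (show 1 ≤ J ∧ 1 ≤ (2*(n:ℤ)-2*(I:ℤ)-(J:ℤ)).toNat by omega),
      if_neg (show ¬(1 ≤ 2*I ∧ 1 ≤ (2*(n:ℤ)-2*(I:ℤ)-(J:ℤ)).toNat) by omega),
      if_neg (show ¬(1 ≤ 2*I ∧ 1 ≤ J) by omega),
      rC_neg _ ((I:ℤ)-1) (J:ℤ) (by omega),
      rC_odd_eval (n-1) (I:ℤ) ((J:ℤ)-1) (by omega) (by omega) (2*I+1) (J-1)
        ((2*(n:ℤ)-2*(I:ℤ)-(J:ℤ)).toNat - 1) (by omega) (by omega) (by omega),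
      rC_neg _ ((I:ℤ)-1) ((J:ℤ)+1) (by omega),
      rC_neg _ ((I:ℤ)-1) ((J:ℤ)-1) (by omega)]
    push_cast
    ring
  -- FTF
  · rw [if_neg (show ¬((1:ℕ) ≤ 2 ∧ 1 ≤ 2*I) by omega),
      if_neg (show ¬(1 ≤ J ∧ 1 ≤ (2*(n:ℤ)-2*(I:ℤ)-(J:ℤ)).toNat) by omega),
      if_neg (show ¬(1 ≤ 2*I ∧ 1 ≤ (2*(n:ℤ)-2*(I:ℤ)-(J:ℤ)).toNat) by omega),
      if_neg (show ¬(1 ≤ 2*I ∧ 1 ≤ J) by omega),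
      rC_neg _ ((I:ℤ)-1) (J:ℤ) (by omega),
      rC_odd_zero (n-1) (I:ℤ) ((J:ℤ)-1) (by omega) (by omega) (by omega),
      rC_neg _ ((I:ℤ)-1) ((J:ℤ)+1) (by omega),
      rC_neg _ ((I:ℤ)-1) ((J:ℤ)-1) (by omega)]
    push_cast
    ring
  -- FFT
  · rw [if_neg (show ¬((1:ℕ) ≤ 2 ∧ 1 ≤ 2*I) by omega),
      if_neg (show ¬(1 ≤ J ∧ 1 ≤ (2*(n:ℤ)-2*(I:ℤ)-(J:ℤ)).toNat) by omega),
      if_neg (show ¬(1 ≤ 2*I ∧ 1 ≤ (2*(n:ℤ)-2*(I:ℤ)-(J:ℤ)).toNat) by omega),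
      if_neg (show ¬(1 ≤ 2*I ∧ 1 ≤ J) by omega),
      rC_neg _ ((I:ℤ)-1) (J:ℤ) (by omega),
      rC_neg _ (I:ℤ) ((J:ℤ)-1) (by omega),
      rC_neg _ ((I:ℤ)-1) ((J:ℤ)+1) (by omega),
      rC_neg _ ((I:ℤ)-1) ((J:ℤ)-1) (by omega)]
    push_cast
    ring
  -- FFF
  · rw [if_neg (show ¬((1:ℕ) ≤ 2 ∧ 1 ≤ 2*I) by omega),
      if_neg (show ¬(1 ≤ J ∧ 1 ≤ (2*(n:ℤ)-2*(I:ℤ)-(J:ℤ)).toNat) by omega),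
      if_neg (show ¬(1 ≤ 2*I ∧ 1 ≤ (2*(n:ℤ)-2*(I:ℤ)-(J:ℤ)).toNat) by omega),
      if_neg (show ¬(1 ≤ 2*I ∧ 1 ≤ J) by omega),
      rC_neg _ ((I:ℤ)-1) (J:ℤ) (by omega),
      rC_neg _ (I:ℤ) ((J:ℤ)-1) (by omega),
      rC_neg _ ((I:ℤ)-1) ((J:ℤ)+1) (by omega),
      rC_neg _ ((I:ℤ)-1) ((J:ℤ)-1) (by omega)]
    push_cast
    ring

theorem stmt13 (n : ℕ) (hn : 1 ≤ n) (i j : ℤ) (hi : 0 ≤ i) (hj : 0 ≤ j) :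
    rC (2*n+1) i j =
      2 * rC (2*n) i j + (2*(i:ℚ)+2) * rC (2*n) (i+1) (j-1) + ((j:ℚ)+1) * rC (2*n) i (j+1)
        + (2*(n:ℚ)-2*(i:ℚ)-(j:ℚ)+1) * rC (2*n) i (j-1) ∧
    rC (2*n) i j =
      2 * rC (2*n-1) (i-1) j + (2*(i:ℚ)+1) * rC (2*n-1) i (j-1)
        + ((j:ℚ)+1) * rC (2*n-1) (i-1) (j+1)
        + (2*(n:ℚ)-2*(i:ℚ)-(j:ℚ)+1) * rC (2*n-1) (i-1) (j-1) := by
  obtain ⟨I, rfl⟩ := Int.eq_ofNat_of_zero_le hi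
  obtain ⟨J, rfl⟩ := Int.eq_ofNat_of_zero_le hj
  constructor
  · exact_mod_cast part1 n I J
  · exact_mod_cast part2 n I J hn
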